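/- Suppose Q(λ) ∈ ℂ[λ] is monic with simple roots and there exists a polynomial P(λ) satisfying P(λ + i/2)Q(λ - i/2) - P(λ - i/2)Q(λ + i/2) = λ^L. Then every root λ₀ of Q with λ₀ ∉ {i/2, -i/2} satisfies the Bethe equation (λ₀ + i/2)^L ∏_{roots μ ≠ λ₀}(λ₀ - μ - i) = (λ₀ - i/2)^L ∏_{roots μ ≠ λ₀}(λ₀ - μ + i), provided gcd(P, Q) = 1. -/
import Mathlib


open Complex Polynomial Finset

/-- If `Q = ∏ (λ - λ_k)` (distinct roots) admits a coprime polynomial partner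
`P` in the Wronskian relation `P(λ+i/2)Q(λ-i/2) - P(λ-i/2)Q(λ+i/2) = λ^L`,
then every root `λ₀ ∉ {i/2, -i/2}` of `Q` satisfies the Bethe equation. -/
theorem bethe_from_wronskian (L K : ℕ) (hL : 0 < L)
    (l : Fin K → ℂ) (hdist : Function.Injective l)
    (Q P : Polynomial ℂ) (hQ : Q = ∏ k : Fin K, (X - C (l k)))
    (hW : P.comp (X + C (I / 2)) * Q.comp (X - C (I / 2)) -
          P.comp (X - C (I / 2)) * Q.comp (X + C (I / 2)) = X ^ L)
    (hcop : IsCoprime P Q) :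
    ∀ k : Fin K, l k ≠ I / 2 → l k ≠ -(I / 2) →
      (l k + I / 2) ^ L * ∏ j ∈ univ.erase k, (l k - l j - I) =
      (l k - I / 2) ^ L * ∏ j ∈ univ.erase k, (l k - l j + I) := by
  intro k _ _
  subst hQ
  have hQeval : ∀ z : ℂ, eval z (∏ j : Fin K, (X - C (l j))) = ∏ j, (z - l j) := by
    intro z; simp [eval_prod]
  have e1 := congrArg (eval (l k + I / 2)) hW
  have e2 := congrArg (eval (l k - I / 2)) hW
  simp only [eval_sub, eval_mul, eval_comp, eval_add, eval_X, eval_C, eval_pow, hQeval] at e1 e2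
  have hz : ∀ z : ℂ, (∏ j, (z - l j)) = (z - l k) * ∏ j ∈ univ.erase k, (z - l j) :=
    fun z => (Finset.mul_prod_erase univ _ (mem_univ k)).symm
  rw [hz, hz] at e1
  rw [hz, hz] at e2
  rw [show l k + I / 2 - I / 2 = l k by ring] at e1
  rw [show l k - I / 2 + I / 2 = l k by ring] at e2
  have p1 : (∏ j ∈ univ.erase k, (l k + I / 2 + I / 2 - l j)) =
      ∏ j ∈ univ.erase k, (l k - l j + I) := Finset.prod_congr rfl (fun j _ => by ring)
  have p2 : (∏ j ∈ univ.erase k, (l k - I / 2 - I / 2 - l j)) =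
      ∏ j ∈ univ.erase k, (l k - l j - I) := Finset.prod_congr rfl (fun j _ => by ring)
  rw [p1] at e1
  rw [p2] at e2
  linear_combination (∏ j ∈ univ.erase k, (l k - l j + I)) * e2 -
    (∏ j ∈ univ.erase k, (l k - l j - I)) * e1
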